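/- There exist a tensor M (of order 4, dimension 2) that is not semipositive and nonnegative diagonal matrices D1, D2 such that both D1·M and D2·M are semipositive tensors; hence semipositivity of DM for some nonnegative diagonal D does not imply semipositivity of M. -/

import Mathlib

open Finset

/-- Action of a real tensor of order `k+1` and dimension `n` (entries indexed by a
leading index and `k` trailing indices) on a vector: `(M u^{k})_i = ∑ m_{i f} ∏ u_{f j}`. -/
def tApply {n k : ℕ} (m : Fin n → (Fin k → Fin n) → ℝ) (u : Fin n → ℝ) (i : Fin n) : ℝ :=
  ∑ f : Fin k → Fin n, m i f * ∏ j, u (f j)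

/-- `M` is semipositive: for every nonzero `u ≥ 0` there is `l` with `u l > 0` and `(M u^{r-1})_l ≥ 0`. -/
def Semipositive {n k : ℕ} (m : Fin n → (Fin k → Fin n) → ℝ) : Prop :=
  ∀ u : Fin n → ℝ, 0 ≤ u → u ≠ 0 → ∃ l, 0 < u l ∧ 0 ≤ tApply m u l

/-- `M` is strictly semipositive. -/
def StrictlySemipositive {n k : ℕ} (m : Fin n → (Fin k → Fin n) → ℝ) : Prop :=
  ∀ u : Fin n → ℝ, 0 ≤ u → u ≠ 0 → ∃ l, 0 < u l ∧ 0 < tApply m u l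

/-- A matrix is semimonotone. -/
def Semimonotone {n : ℕ} (A : Fin n → Fin n → ℝ) : Prop :=
  ∀ z : Fin n → ℝ, 0 ≤ z → z ≠ 0 → ∃ k, 0 < z k ∧ 0 ≤ ∑ j, A k j * z j

/-- A matrix is strictly semimonotone. -/
def StrictlySemimonotone {n : ℕ} (A : Fin n → Fin n → ℝ) : Prop :=
  ∀ z : Fin n → ℝ, 0 ≤ z → z ≠ 0 → ∃ k, 0 < z k ∧ 0 < ∑ j, A k j * z j

/-- `M` is row diagonal: entries vanish unless all trailing indices coincide. -/
def RowDiagonal {n k : ℕ} (m : Fin n → (Fin k → Fin n) → ℝ) : Prop :=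
  ∀ i (f : Fin k → Fin n), (¬ ∃ c, ∀ j, f j = c) → m i f = 0

/-- Majorization matrix `M̃_{ij} = m_{i j ... j}`. -/
def majorization {n k : ℕ} (m : Fin n → (Fin k → Fin n) → ℝ) : Fin n → Fin n → ℝ :=
  fun i j => m i (fun _ => j)

lemma sum_fn3 (g : (Fin 3 → Fin 2) → ℝ) :
    ∑ f : Fin 3 → Fin 2, g f = ∑ a : Fin 2, ∑ b : Fin 2, ∑ c : Fin 2, g ![a,b,c] := by
  rw [← (Fin.consEquiv fun _ => Fin 2).sum_comp, Fintype.sum_prod_type]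
  congr 1; ext a
  rw [← (Fin.consEquiv fun _ => Fin 2).sum_comp, Fintype.sum_prod_type]
  congr 1; ext b
  rw [← (Fin.consEquiv fun _ => Fin 2).sum_comp, Fintype.sum_prod_type]
  congr 1; ext c
  rw [Fintype.sum_unique]
  congr 1

noncomputable def mEx : Fin 2 → (Fin 3 → Fin 2) → ℝ := fun i f =>
  if i = 0 then
    (if f = ![0,0,0] then 1 else if f = ![0,0,1] then (-3) else if f = ![1,1,1] then (-1) else 0)
  else
    (if f = ![0,0,1] then (-3) else if f = ![1,1,1] then 2 else 0)

lemma tApply0 (u : Fin 2 → ℝ) : tApply mEx u 0 = u 0 ^ 3 - 3 * u 0 ^ 2 * u 1 - u 1 ^ 3 := by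
  rw [tApply, sum_fn3]
  simp only [Fin.sum_univ_two, Fin.prod_univ_three, mEx]
  norm_num [funext_iff, Fin.forall_fin_succ, Matrix.cons_val_zero, Matrix.cons_val_one,
    Matrix.head_cons, Fin.forall_fin_zero_pi, Matrix.cons_val_two]
  ring

lemma tApply1 (u : Fin 2 → ℝ) : tApply mEx u 1 = -3 * u 0 ^ 2 * u 1 + 2 * u 1 ^ 3 := by
  rw [tApply, sum_fn3]
  simp only [Fin.sum_univ_two, Fin.prod_univ_three, mEx]
  norm_num [funext_iff, Fin.forall_fin_succ, Matrix.cons_val_zero, Matrix.cons_val_one,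
    Matrix.head_cons, Fin.forall_fin_zero_pi, Matrix.cons_val_two]
  ring

theorem stmt3 : ∃ (m : Fin 2 → (Fin 3 → Fin 2) → ℝ) (d1 d2 : Fin 2 → ℝ),
    (∀ i, 0 ≤ d1 i) ∧ (∀ i, 0 ≤ d2 i) ∧ ¬ Semipositive m ∧
    Semipositive (fun i f => d1 i * m i f) ∧
    Semipositive (fun i f => d2 i * m i f) := by
  refine ⟨mEx, ![0,3], ![2,0], ?_, ?_, ?_, ?_, ?_⟩
  · intro i; fin_cases i <;> norm_num
  · intro i; fin_cases i <;> norm_num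
  · intro h
    obtain ⟨l, hl, hle⟩ := h ![1,1] (by intro i; fin_cases i <;> norm_num)
      (by simp [funext_iff, Fin.forall_fin_two])
    have key : ∀ l : Fin 2, tApply mEx ![1,1] l < 0 := by
      intro l
      fin_cases l
      · show tApply mEx ![1,1] 0 < 0
        rw [tApply0]; norm_num
      · show tApply mEx ![1,1] 1 < 0
        rw [tApply1]; norm_num
    exact absurd hle (not_le.mpr (key l))
  · intro u hu hne
    rcases lt_or_eq_of_le (hu 0) with h0 | h0
    · refine ⟨0, h0, ?_⟩
      have : tApply (fun i f => ![(0:ℝ),3] i * mEx i f) u 0 = 0 := by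
        simp [tApply]
      rw [this]
    · refine ⟨1, ?_, ?_⟩
      · rcases lt_or_eq_of_le (hu 1) with h1 | h1
        · exact h1
        · exact absurd (funext fun i => by fin_cases i <;> simp [← h0, ← h1]) (Ne.symm hne)
      · have : tApply (fun i f => ![(0:ℝ),3] i * mEx i f) u 1 = 3 * tApply mEx u 1 := by
          simp [tApply, mul_sum, mul_assoc]
        rw [this, tApply1, show u 0 = 0 from h0.symm]
        nlinarith [pow_nonneg (hu 1) 3]
  · intro u hu hne
    rcases lt_or_eq_of_le (hu 1) with h1 | h1
    · refine ⟨1, h1, ?_⟩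
      have : tApply (fun i f => ![(2:ℝ),0] i * mEx i f) u 1 = 0 := by
        simp [tApply]
      rw [this]
    · refine ⟨0, ?_, ?_⟩
      · rcases lt_or_eq_of_le (hu 0) with h0 | h0
        · exact h0
        · exact absurd (funext fun i => by fin_cases i <;> simp [← h0, ← h1]) (Ne.symm hne)
      · have : tApply (fun i f => ![(2:ℝ),0] i * mEx i f) u 0 = 2 * tApply mEx u 0 := by
          simp [tApply, mul_sum, mul_assoc]
        rw [this, tApply0, show u 1 = 0 from h1.symm]
        nlinarith [pow_nonneg (hu 0) 3]
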